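/- Let S, S' be finite multisets in ℝ^d. If there exists a halfspace h with frequency-weighted agreement (|S'|·P_{x∼U_{S'}}[h(x)=−1] + |S|·P_{x∼U_S}[h(x)=1])/(|S|+|S'|) ≥ 1 − ε, and both |S|/(|S|+|S'|) and |S'|/(|S|+|S'|) are within ε of 1/2, then disc_F(U_S, U_{S'}) ≥ 1 − 8ε, where F is the class of degree-k polynomial threshold functions (k ≥ 1) and disc_F(D₁,D₂) = sup_{f₁,f₂∈F} |P_{D₁}[f₁ ≠ f₂] − P_{D₂}[f₁ ≠ f₂]|. -/

import Mathlib

open scoped Classical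

/-- The probability that a uniformly random element of the finite multiset `S`
satisfies the predicate `p`. -/
noncomputable def prMul {α : Type*} (S : Multiset α) (p : α → Prop) : ℝ :=
  (S.countP p : ℝ) / (Multiset.card S : ℝ)

lemma prMul_nonneg {α : Type*} (S : Multiset α) (p : α → Prop) : 0 ≤ prMul S p :=
  div_nonneg (Nat.cast_nonneg _) (Nat.cast_nonneg _)

lemma prMul_le_one {α : Type*} (S : Multiset α) (p : α → Prop) : prMul S p ≤ 1 := by
  unfold prMul
  rcases eq_or_ne (Multiset.card S) 0 with h | h
  · simp [h]
  · exact div_le_one_of_le₀ (by exact_mod_cast Multiset.countP_le_card _ _)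
      (Nat.cast_nonneg _)

lemma prMul_congr {α : Type*} (S : Multiset α) (p q : α → Prop) (h : ∀ x, p x ↔ q x) :
    prMul S p = prMul S q := by
  unfold prMul
  rw [Multiset.countP_congr rfl (fun x _ => by
    simp only [eq_iff_iff]; exact h x)]

lemma prMul_not {α : Type*} (S : Multiset α) (p : α → Prop) (h : Multiset.card S ≠ 0) :
    prMul S (fun x => ¬ p x) = 1 - prMul S p := by
  unfold prMul
  have hsum := Multiset.card_eq_countP_add_countP (p := p) S
  have hc : (0:ℝ) < (Multiset.card S : ℝ) := by positivity
  field_simp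
  rw [hsum]
  push_cast
  ring_nf
  congr 1
  · exact @Multiset.countP_congr _ S S rfl _ _ (fun a => Classical.propDecidable _)
      (fun a => instDecidableNot) (fun x _ => rfl)

/-- `f` is a degree-`k` polynomial threshold function on `ℝ^d`. -/
def IsPTF (d k : ℕ) (f : EuclideanSpace ℝ (Fin d) → ℝ) : Prop :=
  ∃ p : MvPolynomial (Fin d) ℝ, p.totalDegree ≤ k ∧
    ∀ x, f x = if 0 ≤ MvPolynomial.eval (fun i => x i) p then (1 : ℝ) else -1

lemma isPTF_one (d k : ℕ) : IsPTF d k (fun _ => (1 : ℝ)) := by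
  refine ⟨0, by simp, fun x => by simp⟩

lemma isPTF_halfspace (d k : ℕ) (hk : 1 ≤ k) (w : EuclideanSpace ℝ (Fin d)) (b : ℝ)
    (h : EuclideanSpace ℝ (Fin d) → ℝ)
    (hdef : ∀ x, h x = if 0 ≤ inner (𝕜 := ℝ) w x + b then (1 : ℝ) else -1) :
    IsPTF d k h := by
  refine ⟨(∑ i : Fin d, MvPolynomial.C (w i) * MvPolynomial.X i) + MvPolynomial.C b, ?_, ?_⟩
  · refine le_trans (MvPolynomial.totalDegree_add _ _) (max_le ?_ ?_)
    · refine le_trans (MvPolynomial.totalDegree_finset_sum _ _) ?_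
      refine (Finset.sup_le fun i _ => ?_)
      refine le_trans (MvPolynomial.totalDegree_mul _ _) ?_
      simp only [MvPolynomial.totalDegree_C, MvPolynomial.totalDegree_X, zero_add]
      exact hk
    · simp [MvPolynomial.totalDegree_C]
  · intro x
    rw [hdef x]
    have : (inner (𝕜 := ℝ) w x : ℝ) + b
        = MvPolynomial.eval (fun i => x i)
          ((∑ i : Fin d, MvPolynomial.C (w i) * MvPolynomial.X i) + MvPolynomial.C b) := by
      simp [PiLp.inner_apply, RCLike.inner_apply, map_sum]
      exact Finset.sum_congr rfl (fun i _ => mul_comm _ _)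
    rw [this]

/-- The discrepancy between the uniform distributions on `S` and `S'` with respect
to the class `F`. -/
noncomputable def disc (d : ℕ) (F : Set (EuclideanSpace ℝ (Fin d) → ℝ))
    (S S' : Multiset (EuclideanSpace ℝ (Fin d))) : ℝ :=
  sSup {v : ℝ | ∃ f1 ∈ F, ∃ f2 ∈ F,
    v = |prMul S (fun x => f1 x ≠ f2 x) - prMul S' (fun x => f1 x ≠ f2 x)|}

lemma disc_bddAbove (d : ℕ) (F : Set (EuclideanSpace ℝ (Fin d) → ℝ))
    (S S' : Multiset (EuclideanSpace ℝ (Fin d))) :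
    BddAbove {v : ℝ | ∃ f1 ∈ F, ∃ f2 ∈ F,
      v = |prMul S (fun x => f1 x ≠ f2 x) - prMul S' (fun x => f1 x ≠ f2 x)|} := by
  refine ⟨1, ?_⟩
  rintro v ⟨f1, -, f2, -, rfl⟩
  have h1 := prMul_nonneg S (fun x => f1 x ≠ f2 x)
  have h2 := prMul_le_one S (fun x => f1 x ≠ f2 x)
  have h3 := prMul_nonneg S' (fun x => f1 x ≠ f2 x)
  have h4 := prMul_le_one S' (fun x => f1 x ≠ f2 x)
  rw [abs_le]
  constructor <;> linarith

theorem stmt15 (d k : ℕ) (hk : 1 ≤ k) (ε : ℝ) (hε : 0 < ε)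
    (S S' : Multiset (EuclideanSpace ℝ (Fin d)))
    (w : EuclideanSpace ℝ (Fin d)) (b : ℝ) (h : EuclideanSpace ℝ (Fin d) → ℝ)
    -- `h` is a halfspace
    (hdef : ∀ x, h x = if 0 ≤ inner (𝕜 := ℝ) w x + b then (1 : ℝ) else -1)
    -- frequency-weighted agreement of `h` is at least `1 - ε`
    (hagree : 1 - ε ≤
      ((Multiset.card S' : ℝ) * prMul S' (fun x => h x = -1)
          + (Multiset.card S : ℝ) * prMul S (fun x => h x = 1))
        / ((Multiset.card S : ℝ) + (Multiset.card S' : ℝ)))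
    (hbalS : |(Multiset.card S : ℝ)
        / ((Multiset.card S : ℝ) + (Multiset.card S' : ℝ)) - 1 / 2| ≤ ε)
    (hbalS' : |(Multiset.card S' : ℝ)
        / ((Multiset.card S : ℝ) + (Multiset.card S' : ℝ)) - 1 / 2| ≤ ε) :
    1 - 8 * ε ≤ disc d {f | IsPTF d k f} S S' := by
  have hBdd := disc_bddAbove d {f | IsPTF d k f} S S'
  by_cases hε8 : ε < 1/8
  swap
  · -- trivial case: 1 - 8ε ≤ 0 ≤ disc
    have h0 : (0:ℝ) ∈ {v : ℝ | ∃ f1 ∈ {f | IsPTF d k f}, ∃ f2 ∈ {f | IsPTF d k f},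
        v = |prMul S (fun x => f1 x ≠ f2 x) - prMul S' (fun x => f1 x ≠ f2 x)|} := by
      refine ⟨(fun _ => (1:ℝ)), isPTF_one d k, (fun _ => (1:ℝ)), isPTF_one d k, ?_⟩
      have hS : prMul S (fun _ : EuclideanSpace ℝ (Fin d) => (1:ℝ) ≠ (1:ℝ)) = 0 := by
        unfold prMul
        rw [@Multiset.countP_eq_zero _ _ (fun a => Classical.propDecidable _) _ |>.2
          (fun x _ => by simp)]
        simp
      have hS' : prMul S' (fun _ : EuclideanSpace ℝ (Fin d) => (1:ℝ) ≠ (1:ℝ)) = 0 := by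
        unfold prMul
        rw [@Multiset.countP_eq_zero _ _ (fun a => Classical.propDecidable _) _ |>.2
          (fun x _ => by simp)]
        simp
      rw [hS, hS']
      simp
    have := le_csSup hBdd h0
    unfold disc
    push_neg at hε8
    linarith
  -- main case
  set m : ℝ := (Multiset.card S : ℝ) with hm_def
  set n : ℝ := (Multiset.card S' : ℝ) with hn_def
  have hm0 : 0 ≤ m := Nat.cast_nonneg _
  have hn0 : 0 ≤ n := Nat.cast_nonneg _
  have hbS := abs_le.1 hbalS
  have hbS' := abs_le.1 hbalS'
  have hN : 0 < m + n := by
    rcases eq_or_lt_of_le (by linarith : (0:ℝ) ≤ m + n) with hq | hq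
    · exfalso
      rw [← hq] at hbS
      simp at hbS
      linarith [hbS.1]
    · exact hq
  have hm : (1/2 - ε) * (m + n) ≤ m := by
    have := hbS.1
    rw [div_sub' (ne_of_gt hN), le_div_iff₀ hN] at this
    linarith
  have hn : (1/2 - ε) * (m + n) ≤ n := by
    have := hbS'.1
    rw [div_sub' (ne_of_gt hN), le_div_iff₀ hN] at this
    linarith
  have hmpos : 0 < m := by nlinarith
  have hnpos : 0 < n := by nlinarith
  set a : ℝ := prMul S (fun x => h x = 1) with ha_def
  set a' : ℝ := prMul S' (fun x => h x = -1) with hb_def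
  have hag : (1 - ε) * (m + n) ≤ n * a' + m * a := by
    rw [le_div_iff₀ hN] at hagree
    linarith
  have ha1 : a ≤ 1 := prMul_le_one _ _
  have hb1 : a' ≤ 1 := prMul_le_one _ _
  -- the witness value
  have hcardS : Multiset.card S ≠ 0 := by
    intro hc
    rw [hm_def, hc] at hmpos
    simp at hmpos
  have hne : ∀ x, (h x ≠ (1:ℝ)) ↔ h x = -1 := by
    intro x
    rw [hdef x]
    split <;> norm_num
  have hS_eq : prMul S (fun x => h x ≠ (fun _ => (1:ℝ)) x) = 1 - a := by
    have : prMul S (fun x => h x ≠ (fun _ => (1:ℝ)) x)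
        = prMul S (fun x => ¬ (h x = 1)) := prMul_congr _ _ _ (fun x => Iff.rfl)
    rw [this, prMul_not S _ hcardS]
  have hS'_eq : prMul S' (fun x => h x ≠ (fun _ => (1:ℝ)) x) = a' := by
    exact prMul_congr _ _ _ (fun x => hne x)
  have hmem : |prMul S (fun x => h x ≠ (fun _ => (1:ℝ)) x)
      - prMul S' (fun x => h x ≠ (fun _ => (1:ℝ)) x)|
      ∈ {v : ℝ | ∃ f1 ∈ {f | IsPTF d k f}, ∃ f2 ∈ {f | IsPTF d k f},
        v = |prMul S (fun x => f1 x ≠ f2 x) - prMul S' (fun x => f1 x ≠ f2 x)|} :=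
    ⟨h, isPTF_halfspace d k hk w b h hdef, (fun _ => (1:ℝ)), isPTF_one d k, rfl⟩
  have hle := le_csSup hBdd hmem
  rw [hS_eq, hS'_eq] at hle
  have key : 2 - 8 * ε ≤ a + a' := by
    nlinarith [mul_nonneg (sub_nonneg.2 hm) (sub_nonneg.2 ha1),
      mul_nonneg (sub_nonneg.2 hn) (sub_nonneg.2 hb1),
      mul_pos hN (show (0:ℝ) < 1/2 - ε by linarith),
      mul_pos (show (0:ℝ) < 1/8 - ε by linarith) (mul_pos hε hN)]
  have habs : a + a' - 1 ≤ |1 - a - a'| := by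
    calc a + a' - 1 = -(1 - a - a') := by ring
    _ ≤ |1 - a - a'| := neg_le_abs _
  unfold disc
  linarith
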